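/- arXiv:2209.14211 — 5 statements merged into one kernel-verified Lean document; each statement's English description precedes it below -/
import Mathlib

section
/- If R is a pm⁺ G-graded commutative ring, then R is a Gelfand graded ring; moreover, any quotient R/I by a graded ideal I and any localization R_S at a multiplicatively closed set S ⊆ h(R) is again a pm⁺ graded ring. -/
section GradedGelfand

variable {G : Type*} [AddGroup G] [DecidableEq G] {R : Type*} [CommRing R]
variable (𝒜 : G → AddSubgroup R) [GradedRing 𝒜]

/-- A homogeneous (graded) prime ideal: a proper graded ideal that is prime
with respect to homogeneous elements. -/
def IsGradedPrime (P : Ideal R) : Prop :=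
  P.IsHomogeneous 𝒜 ∧ P ≠ ⊤ ∧
    ∀ a b : R, SetLike.IsHomogeneousElem 𝒜 a → SetLike.IsHomogeneousElem 𝒜 b →
      a * b ∈ P → a ∈ P ∨ b ∈ P

/-- A graded maximal ideal: a proper graded ideal maximal among proper graded ideals. -/
def IsGradedMaximal (M : Ideal R) : Prop :=
  M.IsHomogeneous 𝒜 ∧ M ≠ ⊤ ∧
    ∀ J : Ideal R, J.IsHomogeneous 𝒜 → M ≤ J → J ≠ ⊤ → J = M

/-- The homogeneous prime spectrum of a graded ring. -/
def GSpec := { P : Ideal R // IsGradedPrime 𝒜 P }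

/-- The Zariski topology on the homogeneous prime spectrum, generated by the basic
open sets `D_G(r)` for homogeneous `r`; the closed sets are exactly the `V_G(I)`
for graded ideals `I`. -/
instance : TopologicalSpace (GSpec 𝒜) :=
  TopologicalSpace.generateFrom
    { U | ∃ r : R, SetLike.IsHomogeneousElem 𝒜 r ∧ U = { P : GSpec 𝒜 | r ∉ P.1 } }

/-- The set of graded maximal ideals inside the homogeneous prime spectrum. -/
def GMax : Set (GSpec 𝒜) := { P | IsGradedMaximal 𝒜 P.1 }

/-- A Gelfand graded ring: every homogeneous prime ideal is contained in a unique
graded maximal ideal. -/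
def IsGelfandGraded : Prop :=
  ∀ P : Ideal R, IsGradedPrime 𝒜 P →
    ∃! M : Ideal R, IsGradedMaximal 𝒜 M ∧ P ≤ M

/-- A pm⁺ graded ring: for every homogeneous prime `P`, the homogeneous primes
containing `P` form a chain. -/
def IsPMPlusGraded : Prop :=
  ∀ P Q Q' : Ideal R, IsGradedPrime 𝒜 P → IsGradedPrime 𝒜 Q → IsGradedPrime 𝒜 Q' →
    P ≤ Q → P ≤ Q' → Q ≤ Q' ∨ Q' ≤ Q

end GradedGelfand

section Aux

variable {G : Type*} [AddGroup G] [DecidableEq G] {R : Type*} [CommRing R]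
variable (𝒜 : G → AddSubgroup R) [GradedRing 𝒜]

/-- Every proper graded ideal is contained in a graded maximal ideal (Zorn). -/
lemma exists_isGradedMaximal_le (P : Ideal R) (hPh : P.IsHomogeneous 𝒜) (hPt : P ≠ ⊤) :
    ∃ M : Ideal R, IsGradedMaximal 𝒜 M ∧ P ≤ M := by
  set s : Set (Ideal R) := {I | I.IsHomogeneous 𝒜 ∧ I ≠ ⊤ ∧ P ≤ I} with hs
  obtain ⟨M, hPM, hMs, hMmax⟩ := zorn_le_nonempty₀ s (fun c hcs hc y hyc => by
    refine ⟨sSup c, ⟨?_, ?_, ?_⟩, fun z hz => le_sSup hz⟩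
    · exact Ideal.IsHomogeneous.sSup (fun I hI => (hcs hI).1)
    · intro h
      have h1 : (1 : R) ∈ sSup c := h ▸ Submodule.mem_top
      obtain ⟨I, hIc, hI1⟩ := (Submodule.mem_sSup_of_directed ⟨y, hyc⟩
        (hc.directedOn)).1 h1
      exact (hcs hIc).2.1 ((Ideal.eq_top_iff_one I).2 hI1)
    · exact le_trans (hcs hyc).2.2 (le_sSup hyc)) P ⟨hPh, hPt, le_rfl⟩
  refine ⟨M, ⟨hMs.1, hMs.2.1, fun J hJh hMJ hJt => ?_⟩, hPM⟩
  exact le_antisymm (hMmax ⟨hJh, hJt, le_trans hPM hMJ⟩ hMJ) hMJ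

/-- A graded maximal ideal is a graded prime. -/
lemma IsGradedMaximal.isGradedPrime {M : Ideal R} (hM : IsGradedMaximal 𝒜 M) :
    IsGradedPrime 𝒜 M := by
  refine ⟨hM.1, hM.2.1, fun a b ha hb hab => ?_⟩
  by_cases haM : a ∈ M
  · exact Or.inl haM
  right
  set J : Ideal R := M ⊔ Ideal.span {a} with hJ
  have hspan : (Ideal.span {a}).IsHomogeneous 𝒜 := by
    refine Ideal.homogeneous_span 𝒜 {a} ?_
    rintro x hx
    rw [Set.mem_singleton_iff] at hx
    exact hx ▸ ha
  have hJh : J.IsHomogeneous 𝒜 := hM.1.sup hspan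
  have hJt : J = ⊤ := by
    by_contra hne
    have := hM.2.2 J hJh le_sup_left hne
    exact haM (this ▸ (le_sup_right (a := M)) (Ideal.subset_span (Set.mem_singleton a)))
  have h1 : (1 : R) ∈ J := hJt ▸ Submodule.mem_top
  obtain ⟨m, hm, z, hz, hmz⟩ := Submodule.mem_sup.1 h1
  obtain ⟨r, hr⟩ := Ideal.mem_span_singleton'.1 hz
  have hbeq : b = m * b + r * (a * b) := by
    linear_combination (-b) * hmz + (-b) * hr
  rw [hbeq]
  exact M.add_mem (Ideal.mul_mem_right b M hm) (Ideal.mul_mem_left M r hab)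

variable {R' : Type*} [CommRing R'] (ℬ : G → AddSubgroup R') [GradedRing ℬ]

/-- If a ring hom maps `𝒜 g` into `ℬ g`, it commutes with the decompositions. -/
lemma decompose_map (f : R →+* R') (hf : ∀ g : G, ∀ x ∈ 𝒜 g, f x ∈ ℬ g)
    (r : R) (i : G) :
    (DirectSum.decompose ℬ (f r) i : R') = f (DirectSum.decompose 𝒜 r i) := by
  classical
  let F : R' →+ R' :=
    { toFun := fun x => (DirectSum.decompose ℬ x i : R')
      map_zero' := by simp
      map_add' := by intro x y; simp }
  have hFr : ∀ x : R', F x = (DirectSum.decompose ℬ x i : R') := fun _ => rfl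
  have h1 : f r = ∑ j ∈ DFinsupp.support (DirectSum.decompose 𝒜 r),
      f (DirectSum.decompose 𝒜 r j) := by
    rw [← map_sum, DirectSum.sum_support_decompose]
  rw [← hFr, h1, map_sum]
  have hterm : ∀ j ∈ DFinsupp.support (DirectSum.decompose 𝒜 r),
      F (f (DirectSum.decompose 𝒜 r j)) =
        if j = i then f (DirectSum.decompose 𝒜 r j) else 0 := by
    intro j _
    rw [hFr]
    by_cases hji : j = i
    · rw [if_pos hji, DirectSum.decompose_of_mem_same ℬ
        (hji ▸ hf j _ (DirectSum.decompose 𝒜 r j).2)]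
    · rw [if_neg hji, DirectSum.decompose_of_mem_ne ℬ
        (hf j _ (DirectSum.decompose 𝒜 r j).2) hji]
  rw [Finset.sum_congr rfl hterm, Finset.sum_ite_eq' _ i
    (fun j => f (DirectSum.decompose 𝒜 r j))]
  by_cases hi : i ∈ DFinsupp.support (DirectSum.decompose 𝒜 r)
  · rw [if_pos hi]
  · rw [if_neg hi]
    have : DirectSum.decompose 𝒜 r i = 0 := by
      rwa [DFinsupp.notMem_support_iff] at hi
    rw [this]
    simp

/-- The comap of a graded prime along a hom mapping `𝒜 g` into `ℬ g` is graded prime. -/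
lemma isGradedPrime_comap (f : R →+* R') (hf : ∀ g : G, ∀ x ∈ 𝒜 g, f x ∈ ℬ g)
    {Q : Ideal R'} (hQ : IsGradedPrime ℬ Q) : IsGradedPrime 𝒜 (Q.comap f) := by
  refine ⟨?_, ?_, ?_⟩
  · intro i r hr
    have : (DirectSum.decompose ℬ (f r) i : R') ∈ Q := hQ.1 i hr
    rwa [decompose_map 𝒜 ℬ f hf r i] at this
  · intro h
    have h1 : f 1 ∈ Q := (Ideal.eq_top_iff_one _).1 h
    rw [map_one] at h1
    exact hQ.2.1 ((Ideal.eq_top_iff_one Q).2 h1)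
  · intro a b ha hb hab
    obtain ⟨ga, hga⟩ := ha
    obtain ⟨gb, hgb⟩ := hb
    have := hQ.2.2 (f a) (f b) ⟨ga, hf ga a hga⟩ ⟨gb, hf gb b hgb⟩
      (by rw [← map_mul]; exact hab)
    exact this

/-- Transfer of the pm⁺ property along a hom whose comap reflects inclusions of
graded primes. -/
lemma isPMPlusGraded_transfer (f : R →+* R') (hf : ∀ g : G, ∀ x ∈ 𝒜 g, f x ∈ ℬ g)
    (hrefl : ∀ Q Q' : Ideal R', IsGradedPrime ℬ Q → IsGradedPrime ℬ Q' →
      Q.comap f ≤ Q'.comap f → Q ≤ Q')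
    (hpm : IsPMPlusGraded 𝒜) : IsPMPlusGraded ℬ := by
  intro P Q Q' hP hQ hQ' hPQ hPQ'
  have hPc := isGradedPrime_comap 𝒜 ℬ f hf hP
  have hQc := isGradedPrime_comap 𝒜 ℬ f hf hQ
  have hQc' := isGradedPrime_comap 𝒜 ℬ f hf hQ'
  rcases hpm (P.comap f) (Q.comap f) (Q'.comap f) hPc hQc hQc'
      (Ideal.comap_mono hPQ) (Ideal.comap_mono hPQ') with h | h
  · exact Or.inl (hrefl Q Q' hQ hQ' h)
  · exact Or.inr (hrefl Q' Q hQ' hQ h)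

end Aux

section Statements

variable {G : Type*} [AddGroup G] [DecidableEq G] {R : Type*} [CommRing R]
variable (𝒜 : G → AddSubgroup R) [GradedRing 𝒜]

theorem stmt_14 (hpm : IsPMPlusGraded 𝒜) :
    IsGelfandGraded 𝒜 ∧
    (∀ I : Ideal R, I.IsHomogeneous 𝒜 →
      ∀ (ℬ : G → AddSubgroup (R ⧸ I)) [GradedRing ℬ],
        (∀ g : G, ℬ g = (𝒜 g).map (Ideal.Quotient.mk I : R →+* R ⧸ I).toAddMonoidHom) →
        IsPMPlusGraded ℬ) ∧
    (∀ (S : Submonoid R), (∀ s ∈ S, SetLike.IsHomogeneousElem 𝒜 s) →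
      ∀ (ℬ : G → AddSubgroup (Localization S)) [GradedRing ℬ],
        (∀ (g : G) (x : Localization S), x ∈ ℬ g ↔
          ∃ (r s : R) (h : G) (hs : s ∈ S), r ∈ 𝒜 (g + h) ∧ s ∈ 𝒜 h ∧
            x = Localization.mk r ⟨s, hs⟩) →
        IsPMPlusGraded ℬ) := by
  refine ⟨?_, ?_, ?_⟩
  · -- Gelfand
    intro P hP
    obtain ⟨M, hM, hPM⟩ := exists_isGradedMaximal_le 𝒜 P hP.1 hP.2.1
    refine ⟨M, ⟨hM, hPM⟩, fun M' ⟨hM', hPM'⟩ => ?_⟩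
    rcases hpm P M' M hP (hM'.isGradedPrime 𝒜) (hM.isGradedPrime 𝒜) hPM' hPM with h | h
    · exact (hM'.2.2 M hM.1 h hM.2.1).symm
    · exact hM.2.2 M' hM'.1 h hM'.2.1
  · -- quotient
    intro I _ ℬ _ hB
    refine isPMPlusGraded_transfer 𝒜 ℬ (Ideal.Quotient.mk I) ?_ ?_ hpm
    · intro g x hx
      rw [hB g]
      exact ⟨x, hx, rfl⟩
    · intro Q Q' _ _ h
      exact (Ideal.comap_le_comap_iff_of_surjective (Ideal.Quotient.mk I)
        Ideal.Quotient.mk_surjective Q Q').1 h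
  · -- localization
    intro S _ ℬ _ hB
    refine isPMPlusGraded_transfer 𝒜 ℬ (algebraMap R (Localization S)) ?_ ?_ hpm
    · intro g x hx
      rw [hB g]
      exact ⟨x, 1, 0, S.one_mem, by rwa [add_zero], SetLike.GradedOne.one_mem,
        (Localization.mk_one_eq_algebraMap x).symm⟩
    · intro Q Q' _ _ h
      have := Ideal.map_mono (f := algebraMap R (Localization S)) h
      rwa [IsLocalization.map_comap S, IsLocalization.map_comap S] at this
end Statements
end

section
/- A G-graded commutative ring R is a pm⁺ graded ring if and only if for any two homogeneous prime ideals P, Q which are not comparable under inclusion, there exist homogeneous elements r, r' ∈ h(R) with rr' = 0, r ∉ P and r' ∉ Q. -/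
section Statements

variable {G : Type*} [AddGroup G] [DecidableEq G] {R : Type*} [CommRing R]
variable (𝒜 : G → AddSubgroup R) [GradedRing 𝒜]

lemma aux_exists_graded_prime (T : Set R) (h1 : (1:R) ∈ T)
    (hmul : ∀ a ∈ T, ∀ b ∈ T, a * b ∈ T) (h0 : (0:R) ∉ T) :
    ∃ I : Ideal R, IsGradedPrime 𝒜 I ∧ ∀ t ∈ T, t ∉ I := by
  set S : Set (Ideal R) := { I | Ideal.IsHomogeneous 𝒜 I ∧ ∀ t ∈ T, t ∉ I } with hSdef
  have hbot : (⊥ : Ideal R) ∈ S := ⟨Ideal.IsHomogeneous.bot 𝒜, fun t ht hm => by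
    rw [Ideal.mem_bot] at hm; subst hm; exact h0 ht⟩
  obtain ⟨M, -, hM⟩ : ∃ M, ⊥ ≤ M ∧ Maximal (· ∈ S) M := by
    apply zorn_le_nonempty₀ S ?_ ⊥ hbot
    intro c hcS hc y hy
    refine ⟨sSup c, ⟨?_, ?_⟩, fun z hz => le_sSup hz⟩
    · intro i r hr
      rw [Submodule.mem_sSup_of_directed ⟨y, hy⟩ hc.directedOn] at hr ⊢
      obtain ⟨I, hIc, hrI⟩ := hr
      exact ⟨I, hIc, (hcS hIc).1 i hrI⟩
    · intro t ht htm
      rw [Submodule.mem_sSup_of_directed ⟨y, hy⟩ hc.directedOn] at htm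
      obtain ⟨I, hIc, h⟩ := htm
      exact (hcS hIc).2 t ht h
  refine ⟨M, ⟨hM.1.1, ?_, ?_⟩, hM.1.2⟩
  · intro h
    exact hM.1.2 1 h1 (h ▸ Submodule.mem_top)
  · intro a b ha hb hab
    by_contra hcon
    push_neg at hcon
    obtain ⟨haM, hbM⟩ := hcon
    have key : ∀ x : R, SetLike.IsHomogeneousElem 𝒜 x → x ∉ M →
        ∃ t ∈ T, t ∈ M ⊔ Ideal.span {x} := by
      intro x hx hxM
      by_contra hno
      push_neg at hno
      have hmem : (M ⊔ Ideal.span {x}) ∈ S := by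
        refine ⟨hM.1.1.sup (Ideal.homogeneous_span 𝒜 {x} ?_), fun t ht => hno t ht⟩
        intro y hy; rw [Set.mem_singleton_iff] at hy; subst hy; exact hx
      have hle := hM.2 hmem le_sup_left
      exact hxM (hle (Submodule.mem_sup_right (Ideal.mem_span_singleton_self x)))
    obtain ⟨t₁, ht₁T, ht₁⟩ := key a ha haM
    obtain ⟨t₂, ht₂T, ht₂⟩ := key b hb hbM
    rw [Submodule.mem_sup] at ht₁ ht₂
    obtain ⟨y₁, hy₁, z₁, hz₁, rfl⟩ := ht₁
    obtain ⟨y₂, hy₂, z₂, hz₂, rfl⟩ := ht₂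
    rw [Ideal.mem_span_singleton'] at hz₁ hz₂
    obtain ⟨c₁, rfl⟩ := hz₁
    obtain ⟨c₂, rfl⟩ := hz₂
    have heq : (y₁ + c₁ * a) * (y₂ + c₂ * b)
        = y₁ * (y₂ + c₂ * b) + (c₁ * a) * y₂ + (c₁ * c₂) * (a * b) := by ring
    have hmemM : (y₁ + c₁ * a) * (y₂ + c₂ * b) ∈ M := by
      rw [heq]
      exact add_mem (add_mem (M.mul_mem_right _ hy₁) (M.mul_mem_left _ hy₂))
        (M.mul_mem_left _ hab)
    exact hM.1.2 _ (hmul _ ht₁T _ ht₂T) hmemM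

theorem stmt_15 : IsPMPlusGraded 𝒜 ↔
    ∀ P Q : Ideal R, IsGradedPrime 𝒜 P → IsGradedPrime 𝒜 Q → ¬ P ≤ Q → ¬ Q ≤ P →
      ∃ r r' : R, SetLike.IsHomogeneousElem 𝒜 r ∧ SetLike.IsHomogeneousElem 𝒜 r' ∧
        r * r' = 0 ∧ r ∉ P ∧ r' ∉ Q := by
  constructor
  · intro hpm P Q hP hQ hPQ hQP
    by_contra hno
    push_neg at hno
    set T : Set R := { x | ∃ r r' : R, SetLike.IsHomogeneousElem 𝒜 r ∧ SetLike.IsHomogeneousElem 𝒜 r' ∧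
      r ∉ P ∧ r' ∉ Q ∧ x = r * r' } with hTdef
    have h1P : (1 : R) ∉ P := Ideal.ne_top_iff_one P |>.1 hP.2.1
    have h1Q : (1 : R) ∉ Q := Ideal.ne_top_iff_one Q |>.1 hQ.2.1
    have h1 : (1 : R) ∈ T :=
      ⟨1, 1, SetLike.isHomogeneousElem_one 𝒜, SetLike.isHomogeneousElem_one 𝒜, h1P, h1Q, (one_mul 1).symm⟩
    have hmul : ∀ a ∈ T, ∀ b ∈ T, a * b ∈ T := by
      rintro _ ⟨r, r', hr, hr', hrP, hr'Q, rfl⟩ _ ⟨s, s', hs, hs', hsP, hs'Q, rfl⟩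
      refine ⟨r * s, r' * s', SetLike.IsHomogeneousElem.mul hr hs, SetLike.IsHomogeneousElem.mul hr' hs',
        ?_, ?_, by ring⟩
      · intro h
        rcases hP.2.2 r s hr hs h with h' | h' <;> [exact hrP h'; exact hsP h']
      · intro h
        rcases hQ.2.2 r' s' hr' hs' h with h' | h' <;> [exact hr'Q h'; exact hs'Q h']
    have h0 : (0 : R) ∉ T := by
      rintro ⟨r, r', hr, hr', hrP, hr'Q, h⟩
      exact hr'Q (hno r r' hr hr' h.symm hrP)
    obtain ⟨I, hI, hdisj⟩ := aux_exists_graded_prime 𝒜 T h1 hmul h0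
    have hIle : ∀ (J : Ideal R), (1 : R) ∉ J →
        (∀ x : R, SetLike.IsHomogeneousElem 𝒜 x → x ∈ I → x ∈ J) → I ≤ J := by
      intro J _ hhom x hx
      classical
      rw [← DirectSum.sum_support_decompose 𝒜 x]
      apply Ideal.sum_mem
      intro i _
      exact hhom _ ⟨i, (DirectSum.decompose 𝒜 x i).2⟩ (hI.1 i hx)
    have hIP : I ≤ P := by
      refine hIle P h1P ?_
      intro x hx hxI
      by_contra hxP
      exact hdisj _ ⟨x, 1, hx, SetLike.isHomogeneousElem_one 𝒜, hxP, h1Q, (mul_one x).symm⟩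
        (by simpa using hxI)
    have hIQ : I ≤ Q := by
      refine hIle Q h1Q ?_
      intro x hx hxI
      by_contra hxQ
      exact hdisj _ ⟨1, x, SetLike.isHomogeneousElem_one 𝒜, hx, h1P, hxQ, (one_mul x).symm⟩
        (by simpa using hxI)
    rcases hpm I P Q hI hP hQ hIP hIQ with h | h <;> [exact hPQ h; exact hQP h]
  · intro hcond P Q Q' hP hQ hQ' hPQ hPQ'
    by_contra hno
    push_neg at hno
    obtain ⟨hQQ', hQ'Q⟩ := hno
    obtain ⟨r, r', hr, hr', hrr', hrQ, hr'Q'⟩ := hcond Q Q' hQ hQ' hQQ' hQ'Q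
    have h0P : r * r' ∈ P := by rw [hrr']; exact P.zero_mem
    rcases hP.2.2 r r' hr hr' h0P with h | h
    · exact hrQ (hPQ h)
    · exact hr'Q' (hPQ' h)
end Statements
end

section
/- A G-graded commutative ring R is a pm⁺ graded ring if and only if for every minimal homogeneous prime ideal m of R, the homogeneous prime ideals of R/m are linearly ordered under inclusion. -/
section Statements

variable {G : Type*} [AddGroup G] [DecidableEq G] {R : Type*} [CommRing R]
variable (𝒜 : G → AddSubgroup R) [GradedRing 𝒜]

section AuxProof
open DirectSum

variable {G : Type*} [AddGroup G] [DecidableEq G] {R : Type*} [CommRing R]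
variable (𝒜 : G → AddSubgroup R) [GradedRing 𝒜]

theorem aux_decompose_mk {m : Ideal R} (ℬ : G → AddSubgroup (R ⧸ m)) [GradedRing ℬ]
    (hℬ : ∀ g : G, ℬ g = (𝒜 g).map (Ideal.Quotient.mk m : R →+* R ⧸ m).toAddMonoidHom)
    (a : R) (i : G) :
    (DirectSum.decompose ℬ (Ideal.Quotient.mk m a) i : R ⧸ m)
      = Ideal.Quotient.mk m (DirectSum.decompose 𝒜 a i) := by
  classical
  have hmem : ∀ j : G, (Ideal.Quotient.mk m (DirectSum.decompose 𝒜 a j : R) : R ⧸ m) ∈ ℬ j := by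
    intro j
    rw [hℬ j]
    exact ⟨(DirectSum.decompose 𝒜 a j : R), (DirectSum.decompose 𝒜 a j).2, rfl⟩
  conv_lhs => rw [← DirectSum.sum_support_decompose 𝒜 a]
  rw [map_sum, DirectSum.decompose_sum, DFinsupp.finset_sum_apply,
    AddSubmonoidClass.coe_finset_sum]
  by_cases hsupp : i ∈ DFinsupp.support (DirectSum.decompose 𝒜 a)
  · rw [Finset.sum_eq_single_of_mem i hsupp]
    · exact DirectSum.decompose_of_mem_same ℬ (hmem i)
    · intro j _ hji
      exact DirectSum.decompose_of_mem_ne ℬ (hmem j) hji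
  · rw [DFinsupp.notMem_support_iff] at hsupp
    rw [Finset.sum_eq_zero, hsupp]
    · simp
    · intro j hj
      have hji : j ≠ i := by
        rintro rfl
        rw [DFinsupp.mem_support_iff] at hj
        exact hj hsupp
      exact DirectSum.decompose_of_mem_ne ℬ (hmem j) hji

theorem aux_comap {m : Ideal R} (ℬ : G → AddSubgroup (R ⧸ m)) [GradedRing ℬ]
    (hℬ : ∀ g : G, ℬ g = (𝒜 g).map (Ideal.Quotient.mk m : R →+* R ⧸ m).toAddMonoidHom)
    {P : Ideal (R ⧸ m)} (hP : IsGradedPrime ℬ P) :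
    IsGradedPrime 𝒜 (P.comap (Ideal.Quotient.mk m)) ∧ m ≤ P.comap (Ideal.Quotient.mk m) := by
  constructor
  · refine ⟨?_, ?_, ?_⟩
    · intro i r hr
      have h1 : ((DirectSum.decompose ℬ (Ideal.Quotient.mk m r) i : ℬ i) : R ⧸ m) ∈ P :=
        hP.1 i (Ideal.mem_comap.mp hr)
      rw [aux_decompose_mk 𝒜 ℬ hℬ r i] at h1
      exact Ideal.mem_comap.mpr h1
    · intro h
      apply hP.2.1
      rw [Ideal.eq_top_iff_one] at h ⊢
      simpa using Ideal.mem_comap.mp h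
    · intro a b ha hb hab
      obtain ⟨ga, hga⟩ := ha
      obtain ⟨gb, hgb⟩ := hb
      have hA : SetLike.IsHomogeneousElem ℬ (Ideal.Quotient.mk m a) :=
        ⟨ga, by rw [hℬ]; exact ⟨a, hga, rfl⟩⟩
      have hB : SetLike.IsHomogeneousElem ℬ (Ideal.Quotient.mk m b) :=
        ⟨gb, by rw [hℬ]; exact ⟨b, hgb, rfl⟩⟩
      rcases hP.2.2 _ _ hA hB (by rw [← map_mul]; exact Ideal.mem_comap.mp hab) with h | h
      · exact Or.inl (Ideal.mem_comap.mpr h)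
      · exact Or.inr (Ideal.mem_comap.mpr h)
  · intro a ham
    simp [Ideal.mem_comap, Ideal.Quotient.eq_zero_iff_mem.mpr ham]

theorem aux_comap_map {m : Ideal R} {J : Ideal R} (hJ : m ≤ J) :
    (J.map (Ideal.Quotient.mk m)).comap (Ideal.Quotient.mk m) = J := by
  rw [Ideal.comap_map_of_surjective _ Ideal.Quotient.mk_surjective,
    ← RingHom.ker_eq_comap_bot, Ideal.mk_ker, sup_eq_left.mpr hJ]

theorem aux_map {m : Ideal R} (ℬ : G → AddSubgroup (R ⧸ m)) [GradedRing ℬ]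
    (hℬ : ∀ g : G, ℬ g = (𝒜 g).map (Ideal.Quotient.mk m : R →+* R ⧸ m).toAddMonoidHom)
    {Q : Ideal R} (hQ : IsGradedPrime 𝒜 Q) (hmQ : m ≤ Q) :
    IsGradedPrime ℬ (Q.map (Ideal.Quotient.mk m)) := by
  refine ⟨?_, ?_, ?_⟩
  · intro i x hx
    obtain ⟨a, haQ, rfl⟩ := Ideal.mem_map_iff_of_surjective _ Ideal.Quotient.mk_surjective |>.mp hx
    rw [aux_decompose_mk 𝒜 ℬ hℬ a i]
    exact Ideal.mem_map_of_mem _ (hQ.1 i haQ)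
  · intro h
    apply hQ.2.1
    rw [← aux_comap_map hmQ, h, Ideal.comap_top]
  · intro x y hx hy hxy
    obtain ⟨gx, hgx⟩ := hx
    obtain ⟨gy, hgy⟩ := hy
    rw [hℬ] at hgx hgy
    obtain ⟨a, ha, rfl⟩ := hgx
    obtain ⟨b, hb, rfl⟩ := hgy
    have hab : a * b ∈ Q := by
      rw [← aux_comap_map hmQ]
      exact Ideal.mem_comap.mpr (by rw [map_mul]; exact hxy)
    rcases hQ.2.2 a b ⟨gx, ha⟩ ⟨gy, hb⟩ hab with h | h
    · exact Or.inl (Ideal.mem_map_of_mem _ h)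
    · exact Or.inr (Ideal.mem_map_of_mem _ h)

variable (m : Ideal R)

def qGrading (g : G) : AddSubgroup (R ⧸ m) :=
  (𝒜 g).map (Ideal.Quotient.mk m : R →+* R ⧸ m).toAddMonoidHom

instance qGradedMonoid : SetLike.GradedMonoid (qGrading 𝒜 m) where
  one_mem := ⟨1, SetLike.GradedOne.one_mem, by simp⟩
  mul_mem := by
    rintro i j x y hx hy
    obtain ⟨a, ha, rfl⟩ := AddSubgroup.mem_map.mp hx
    obtain ⟨b, hb, rfl⟩ := AddSubgroup.mem_map.mp hy
    exact AddSubgroup.mem_map.mpr ⟨a * b, SetLike.mul_mem_graded ha hb, by simp⟩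

noncomputable def qDecompose : R →+ (⨁ g, qGrading 𝒜 m g) :=
  ((DirectSum.toAddMonoid fun i =>
    (DirectSum.of (fun g => qGrading 𝒜 m g) i).comp
      { toFun := fun a => (⟨Ideal.Quotient.mk m (a : R),
          AddSubgroup.mem_map.mpr ⟨(a : R), a.2, rfl⟩⟩ : qGrading 𝒜 m i)
        map_zero' := Subtype.ext (by simp)
        map_add' := fun a b => Subtype.ext (by simp) }) :
      (⨁ i, 𝒜 i) →+ ⨁ g, qGrading 𝒜 m g).comp
    (DirectSum.decomposeAddEquiv 𝒜).toAddMonoidHom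

theorem qDecompose_of_mem {a : R} {i : G} (ha : a ∈ 𝒜 i) :
    qDecompose 𝒜 m a = DirectSum.of (fun g => qGrading 𝒜 m g) i
      ⟨Ideal.Quotient.mk m a, AddSubgroup.mem_map.mpr ⟨a, ha, rfl⟩⟩ := by
  unfold qDecompose
  simp only [AddMonoidHom.coe_comp, Function.comp_apply, AddEquiv.coe_toAddMonoidHom,
    DirectSum.decomposeAddEquiv_apply, DirectSum.decompose_of_mem 𝒜 ha,
    DirectSum.toAddMonoid_of]
  rfl

theorem qDecompose_mem_zero (hm : m.IsHomogeneous 𝒜) {a : R} (ha : a ∈ m) :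
    qDecompose 𝒜 m a = 0 := by
  classical
  conv_lhs => rw [← DirectSum.sum_support_decompose 𝒜 a]
  rw [map_sum]
  refine Finset.sum_eq_zero fun j _ => ?_
  rw [qDecompose_of_mem 𝒜 m (DirectSum.decompose 𝒜 a j).2]
  convert map_zero (DirectSum.of (fun g => qGrading 𝒜 m g) j) using 2
  exact Subtype.ext (Ideal.Quotient.eq_zero_iff_mem.mpr (hm j ha))

theorem qDecompose_congr (hm : m.IsHomogeneous 𝒜) {a b : R}
    (h : Ideal.Quotient.mk m a = Ideal.Quotient.mk m b) :
    qDecompose 𝒜 m a = qDecompose 𝒜 m b := by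
  have hab : a - b ∈ m := Ideal.Quotient.eq.mp h
  have := qDecompose_mem_zero 𝒜 m hm hab
  rw [map_sub, sub_eq_zero] at this
  exact this

theorem qDecompose_coe (a : R) :
    (DirectSum.coeAddMonoidHom (qGrading 𝒜 m)) (qDecompose 𝒜 m a)
      = Ideal.Quotient.mk m a := by
  classical
  conv_lhs => rw [← DirectSum.sum_support_decompose 𝒜 a]
  conv_rhs => rw [← DirectSum.sum_support_decompose 𝒜 a]
  rw [map_sum, map_sum, map_sum]
  refine Finset.sum_congr rfl fun j _ => ?_
  rw [qDecompose_of_mem 𝒜 m (DirectSum.decompose 𝒜 a j).2, DirectSum.coeAddMonoidHom_of]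

theorem qDecompose_section (y : ⨁ g, qGrading 𝒜 m g) :
    ∃ b : R, Ideal.Quotient.mk m b = DirectSum.coeAddMonoidHom (qGrading 𝒜 m) y ∧
      qDecompose 𝒜 m b = y := by
  induction y using DirectSum.induction_on with
  | zero => exact ⟨0, by simp, by simp⟩
  | of i x =>
    obtain ⟨a, ha, hax⟩ := AddSubgroup.mem_map.mp x.2
    refine ⟨a, ?_, ?_⟩
    · rw [DirectSum.coeAddMonoidHom_of]; exact hax
    · rw [qDecompose_of_mem 𝒜 m ha]
      congr 1
      exact Subtype.ext hax
  | add u v hu hv =>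
    obtain ⟨b1, hb1, hb1'⟩ := hu
    obtain ⟨b2, hb2, hb2'⟩ := hv
    exact ⟨b1 + b2, by rw [map_add, map_add, hb1, hb2], by rw [map_add, hb1', hb2']⟩

noncomputable def qDecomposition (hm : m.IsHomogeneous 𝒜) :
    DirectSum.Decomposition (qGrading 𝒜 m) where
  decompose' := fun x => qDecompose 𝒜 m (Ideal.Quotient.mk_surjective x).choose
  left_inv := fun x => by
    rw [qDecompose_coe, (Ideal.Quotient.mk_surjective x).choose_spec]
  right_inv := fun y => by
    obtain ⟨b, hb1, hb2⟩ := qDecompose_section 𝒜 m y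
    have hc := (Ideal.Quotient.mk_surjective
      (DirectSum.coeAddMonoidHom (qGrading 𝒜 m) y)).choose_spec
    calc qDecompose 𝒜 m (Ideal.Quotient.mk_surjective
            (DirectSum.coeAddMonoidHom (qGrading 𝒜 m) y)).choose
        = qDecompose 𝒜 m b := qDecompose_congr 𝒜 m hm (hc.trans hb1.symm)
      _ = y := hb2

noncomputable def qGradedRing (hm : m.IsHomogeneous 𝒜) : GradedRing (qGrading 𝒜 m) :=
  { qGradedMonoid 𝒜 m, qDecomposition 𝒜 m hm with }


theorem aux_exists_min {P : Ideal R} (hP : IsGradedPrime 𝒜 P) :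
    ∃ m : Ideal R, IsGradedPrime 𝒜 m ∧ m ≤ P ∧
      ∀ p : Ideal R, IsGradedPrime 𝒜 p → p ≤ m → p = m := by
  have ih : ∀ c ⊆ {q : (Ideal R)ᵒᵈ | IsGradedPrime 𝒜 (OrderDual.ofDual q)},
      IsChain (· ≤ ·) c → ∀ y ∈ c,
        ∃ ub ∈ {q : (Ideal R)ᵒᵈ | IsGradedPrime 𝒜 (OrderDual.ofDual q)}, ∀ z ∈ c, z ≤ ub := by
    intro c hcs hchain y hy
    set c' : Set (Ideal R) := OrderDual.ofDual '' c with hc'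
    have hmemc' : ∀ J ∈ c', IsGradedPrime 𝒜 J := by
      rintro J ⟨q, hq, rfl⟩
      exact hcs hq
    refine ⟨OrderDual.toDual (sInf c'), ?_, ?_⟩
    · refine ⟨?_, ?_, ?_⟩
      · exact Ideal.IsHomogeneous.sInf fun I hI => (hmemc' I hI).1
      · intro htop
        have h1 : sInf c' ≤ OrderDual.ofDual y := sInf_le ⟨y, hy, rfl⟩
        exact (hcs hy).2.1 (top_le_iff.mp (htop ▸ h1))
      · intro a b ha hb hab
        by_contra hcon
        push_neg at hcon
        obtain ⟨hna, hnb⟩ := hcon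
        simp only [OrderDual.ofDual_toDual] at hna hnb hab
        rw [Ideal.mem_sInf] at hna hnb
        push_neg at hna hnb
        obtain ⟨J₁, hJ₁, haJ₁⟩ := hna
        obtain ⟨J₂, hJ₂, hbJ₂⟩ := hnb
        obtain ⟨q₁, hq₁, rfl⟩ := hJ₁
        obtain ⟨q₂, hq₂, rfl⟩ := hJ₂
        rcases eq_or_ne q₁ q₂ with rfl | hne
        · rcases (hmemc' _ ⟨q₁, hq₁, rfl⟩).2.2 a b ha hb
            (Ideal.mem_sInf.mp hab ⟨q₁, hq₁, rfl⟩) with h | h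
          exacts [haJ₁ h, hbJ₂ h]
        · rcases hchain hq₁ hq₂ hne with h | h
          · -- q₁ ≤ᵒᵈ q₂, i.e. ofDual q₂ ≤ ofDual q₁ as ideals
            have hsub : (OrderDual.ofDual q₂ : Ideal R) ≤ OrderDual.ofDual q₁ := h
            rcases (hmemc' _ ⟨q₂, hq₂, rfl⟩).2.2 a b ha hb
              (Ideal.mem_sInf.mp hab ⟨q₂, hq₂, rfl⟩) with hh | hh
            · exact haJ₁ (hsub hh)
            · exact hbJ₂ hh
          · have hsub : (OrderDual.ofDual q₁ : Ideal R) ≤ OrderDual.ofDual q₂ := h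
            rcases (hmemc' _ ⟨q₁, hq₁, rfl⟩).2.2 a b ha hb
              (Ideal.mem_sInf.mp hab ⟨q₁, hq₁, rfl⟩) with hh | hh
            · exact haJ₁ hh
            · exact hbJ₂ (hsub hh)
    · intro z hz
      exact sInf_le (show OrderDual.ofDual z ∈ c' from ⟨z, hz, rfl⟩)
  obtain ⟨m, hPm, hmem, hmax⟩ := zorn_le_nonempty₀ _ ih (OrderDual.toDual P) hP
  exact ⟨OrderDual.ofDual m, hmem, hPm, fun p hp hpm => le_antisymm hpm (hmax hp hpm)⟩



end AuxProof

theorem stmt_16 : IsPMPlusGraded 𝒜 ↔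
    ∀ m : Ideal R, IsGradedPrime 𝒜 m →
      (∀ p : Ideal R, IsGradedPrime 𝒜 p → p ≤ m → p = m) →
      ∀ (ℬ : G → AddSubgroup (R ⧸ m)) [GradedRing ℬ],
        (∀ g : G, ℬ g = (𝒜 g).map (Ideal.Quotient.mk m : R →+* R ⧸ m).toAddMonoidHom) →
        ∀ P Q : Ideal (R ⧸ m), IsGradedPrime ℬ P → IsGradedPrime ℬ Q → P ≤ Q ∨ Q ≤ P := by
  constructor
  · intro hpm m hm _hmin ℬ _inst hℬ P Q hP hQ
    have hcP := aux_comap 𝒜 ℬ hℬ hP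
    have hcQ := aux_comap 𝒜 ℬ hℬ hQ
    rcases hpm m _ _ hm hcP.1 hcQ.1 hcP.2 hcQ.2 with h | h
    · left
      calc P = (P.comap (Ideal.Quotient.mk m)).map (Ideal.Quotient.mk m) :=
            (Ideal.map_comap_of_surjective _ Ideal.Quotient.mk_surjective P).symm
        _ ≤ (Q.comap (Ideal.Quotient.mk m)).map (Ideal.Quotient.mk m) := Ideal.map_mono h
        _ = Q := Ideal.map_comap_of_surjective _ Ideal.Quotient.mk_surjective Q
    · right
      calc Q = (Q.comap (Ideal.Quotient.mk m)).map (Ideal.Quotient.mk m) :=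
            (Ideal.map_comap_of_surjective _ Ideal.Quotient.mk_surjective Q).symm
        _ ≤ (P.comap (Ideal.Quotient.mk m)).map (Ideal.Quotient.mk m) := Ideal.map_mono h
        _ = P := Ideal.map_comap_of_surjective _ Ideal.Quotient.mk_surjective P
  · intro H P Q Q' hP hQ hQ' hPQ hPQ'
    obtain ⟨m, hm, hmP, hmin⟩ := aux_exists_min 𝒜 hP
    letI := qGradedRing 𝒜 m hm.1
    have hℬ : ∀ g : G, qGrading 𝒜 m g
        = (𝒜 g).map (Ideal.Quotient.mk m : R →+* R ⧸ m).toAddMonoidHom := fun _ => rfl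
    have hmQ : m ≤ Q := hmP.trans hPQ
    have hmQ' : m ≤ Q' := hmP.trans hPQ'
    rcases H m hm hmin (qGrading 𝒜 m) hℬ _ _
        (aux_map 𝒜 (qGrading 𝒜 m) hℬ hQ hmQ) (aux_map 𝒜 (qGrading 𝒜 m) hℬ hQ' hmQ') with h | h
    · left
      calc Q = (Q.map (Ideal.Quotient.mk m)).comap (Ideal.Quotient.mk m) :=
            (aux_comap_map hmQ).symm
        _ ≤ (Q'.map (Ideal.Quotient.mk m)).comap (Ideal.Quotient.mk m) := Ideal.comap_mono h
        _ = Q' := aux_comap_map hmQ'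
    · right
      calc Q' = (Q'.map (Ideal.Quotient.mk m)).comap (Ideal.Quotient.mk m) :=
            (aux_comap_map hmQ').symm
        _ ≤ (Q.map (Ideal.Quotient.mk m)).comap (Ideal.Quotient.mk m) := Ideal.comap_mono h
        _ = Q := aux_comap_map hmQ
end Statements
end

section
/- A G-graded commutative ring R is a pm⁺ graded ring if and only if for every homogeneous prime ideal P, the set C(P) = {Q ∈ GSpec(R) : P ⊆ Q or Q ⊆ P} of homogeneous primes comparable with P is a Zariski closed subset of GSpec(R). -/
section Statements

variable {G : Type*} [AddGroup G] [DecidableEq G] {R : Type*} [CommRing R]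
variable (𝒜 : G → AddSubgroup R) [GradedRing 𝒜]

theorem aux_homog_le {P Q : Ideal R} (hP : P.IsHomogeneous 𝒜)
    (h : ∀ r ∈ P, SetLike.IsHomogeneousElem 𝒜 r → r ∈ Q) : P ≤ Q := by
  classical
  intro x hx
  rw [← DirectSum.sum_support_decompose 𝒜 x]
  exact Ideal.sum_mem _ fun i _ => h _ (hP i hx) ⟨i, (DirectSum.decompose 𝒜 x i).2⟩

theorem aux_exists_homog {P Q : Ideal R} (hP : P.IsHomogeneous 𝒜) (h : ¬ P ≤ Q) :
    ∃ r, r ∈ P ∧ SetLike.IsHomogeneousElem 𝒜 r ∧ r ∉ Q := by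
  by_contra hc
  push_neg at hc
  exact h (aux_homog_le 𝒜 hP hc)

theorem stmt_17 : IsPMPlusGraded 𝒜 ↔
    ∀ P : GSpec 𝒜, IsClosed { Q : GSpec 𝒜 | P.1 ≤ Q.1 ∨ Q.1 ≤ P.1 } := by
  constructor
  · intro hpm P
    have key : { Q : GSpec 𝒜 | P.1 ≤ Q.1 ∨ Q.1 ≤ P.1 } =
        ⋂ r ∈ {r : R | SetLike.IsHomogeneousElem 𝒜 r ∧
          ∀ Q : Ideal R, IsGradedPrime 𝒜 Q → Q ≤ P.1 → r ∈ Q},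
          { Q : GSpec 𝒜 | r ∈ Q.1 } := by
      ext Q'
      simp only [Set.mem_setOf_eq, Set.mem_iInter]
      constructor
      · rintro (hle | hle) r ⟨hr, hrQ⟩
        · exact hle (hrQ P.1 P.2 le_rfl)
        · exact hrQ Q'.1 Q'.2 hle
      · intro hQ'
        by_contra hne
        push_neg at hne
        obtain ⟨hne1, hne2⟩ := hne
        -- homogeneous a ∈ P \ Q'
        obtain ⟨a, haP, haH, haQ'⟩ := aux_exists_homog 𝒜 P.2.1 hne1
        -- multiplicative set T
        set T : Submonoid R :=
          { carrier := {x | ∃ a b : R, SetLike.IsHomogeneousElem 𝒜 a ∧ a ∉ P.1 ∧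
              SetLike.IsHomogeneousElem 𝒜 b ∧ b ∉ Q'.1 ∧ x = a * b}
            one_mem' := ⟨1, 1, SetLike.isHomogeneousElem_one 𝒜,
              fun h => P.2.2.1 ((Ideal.eq_top_iff_one _).2 h),
              SetLike.isHomogeneousElem_one 𝒜,
              fun h => Q'.2.2.1 ((Ideal.eq_top_iff_one _).2 h), (one_mul 1).symm⟩
            mul_mem' := by
              rintro x y ⟨a1, b1, ha1, ha1P, hb1, hb1Q, rfl⟩
                ⟨a2, b2, ha2, ha2P, hb2, hb2Q, rfl⟩
              refine ⟨a1 * a2, b1 * b2, SetLike.IsHomogeneousElem.mul ha1 ha2, ?_, SetLike.IsHomogeneousElem.mul hb1 hb2, ?_, by ring⟩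
              · intro h
                rcases P.2.2.2 a1 a2 ha1 ha2 h with h' | h' <;> [exact ha1P h'; exact ha2P h']
              · intro h
                rcases Q'.2.2.2 b1 b2 hb1 hb2 h with h' | h' <;>
                  [exact hb1Q h'; exact hb2Q h'] } with hT
        by_cases h0 : (0 : R) ∈ T
        · obtain ⟨a', b', ha'H, ha'P, hb'H, hb'Q, hab⟩ := h0
          refine hb'Q (hQ' b' ⟨hb'H, fun Q hQp hQle => ?_⟩)
          have : a' * b' ∈ Q := by rw [← hab]; exact Q.zero_mem
          rcases hQp.2.2 a' b' ha'H hb'H this with h' | h'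
          · exact absurd (hQle h') ha'P
          · exact h'
        · -- get an ordinary prime disjoint from T, take its homogeneous core
          have hdisj : Disjoint ((⊥ : Ideal R) : Set R) (T : Set R) := by
            rw [Set.disjoint_left]
            rintro x hx hxT
            rw [SetLike.mem_coe, Ideal.mem_bot] at hx
            exact h0 (hx ▸ hxT)
          obtain ⟨M, hMp, -, hMdisj⟩ := Ideal.exists_le_prime_disjoint ⊥ T hdisj
          set C : Ideal R := Ideal.span {r | SetLike.IsHomogeneousElem 𝒜 r ∧ r ∈ M} with hC
          have hCle : C ≤ M := Ideal.span_le.2 fun r hr => hr.2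
          have hCprime : IsGradedPrime 𝒜 C := by
            refine ⟨Ideal.homogeneous_span 𝒜 _ fun r hr => hr.1, ?_, ?_⟩
            · intro h
              exact hMp.ne_top (Ideal.eq_top_iff_one M |>.2
                (hCle ((Ideal.eq_top_iff_one C).1 h)))
            · intro a' b' ha' hb' hab
              rcases hMp.mul_mem_iff_mem_or_mem.1 (hCle hab) with h' | h'
              · exact Or.inl (Ideal.subset_span ⟨ha', h'⟩)
              · exact Or.inr (Ideal.subset_span ⟨hb', h'⟩)
          have hCP : C ≤ P.1 := by
            refine Ideal.span_le.2 fun r hr => ?_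
            by_contra hrP
            exact Set.disjoint_left.1 hMdisj hr.2
              ⟨r, 1, hr.1, hrP, SetLike.isHomogeneousElem_one 𝒜,
                fun h => Q'.2.2.1 ((Ideal.eq_top_iff_one _).2 h), (mul_one r).symm⟩
          have hCQ' : C ≤ Q'.1 := by
            refine Ideal.span_le.2 fun r hr => ?_
            by_contra hrQ
            exact Set.disjoint_left.1 hMdisj hr.2
              ⟨1, r, SetLike.isHomogeneousElem_one 𝒜,
                fun h => P.2.2.1 ((Ideal.eq_top_iff_one _).2 h), hr.1, hrQ, (one_mul r).symm⟩
          rcases hpm C P.1 Q'.1 hCprime P.2 Q'.2 hCP hCQ' with h' | h'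
          · exact hne1 h'
          · exact hne2 h'
    rw [key]
    refine isClosed_biInter fun r hr => ?_
    have : { Q : GSpec 𝒜 | r ∈ Q.1 } = { Q : GSpec 𝒜 | r ∉ Q.1 }ᶜ := by
      ext Q; simp [Set.mem_compl_iff]
    rw [this]
    have hop : IsOpen { Q : GSpec 𝒜 | r ∉ Q.1 } :=
      TopologicalSpace.GenerateOpen.basic _ ⟨r, hr.1, rfl⟩
    exact hop.isClosed_compl
  · intro h P Q Q' hP hQ hQ' hPQ hPQ'
    have hcl := h ⟨Q, hQ⟩
    have hgen : ∀ U : Set (GSpec 𝒜), IsOpen U → (⟨Q', hQ'⟩ : GSpec 𝒜) ∈ U →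
        (⟨P, hP⟩ : GSpec 𝒜) ∈ U := by
      intro U hU
      induction hU with
      | basic V hV =>
        obtain ⟨r, -, rfl⟩ := hV
        intro hr hrP
        exact hr (hPQ' hrP)
      | univ => exact fun _ => trivial
      | inter V W _ _ ihV ihW => exact fun hm => ⟨ihV hm.1, ihW hm.2⟩
      | sUnion S _ ih => rintro ⟨V, hV, hm⟩; exact ⟨V, hV, ih V hV hm⟩
    by_contra hne
    have hQ'mem : (⟨Q', hQ'⟩ : GSpec 𝒜) ∈ { X : GSpec 𝒜 | Q ≤ X.1 ∨ X.1 ≤ Q }ᶜ := hne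
    have hPmem := hgen _ hcl.isOpen_compl hQ'mem
    exact hPmem (Or.inr hPQ)

end Statements
end

section
/- For a G-graded commutative ring R, the following two conditions are equivalent: (Av) whenever I, J, J' are graded ideals with h(R) ∩ I ⊆ J ∪ J', then I ⊆ J or I ⊆ J'; and (Cm) whenever J, J' are graded ideals not comparable under inclusion, there exist g ∈ G and r, r' ∈ R_g with r ∈ J \ J' and r' ∈ J' \ J. -/
section Statements

variable {G : Type*} [AddGroup G] [DecidableEq G] {R : Type*} [CommRing R]
variable (𝒜 : G → AddSubgroup R) [GradedRing 𝒜]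

lemma aux_le_of_homog (I K : Ideal R) (hI : I.IsHomogeneous 𝒜)
    (h : ∀ r : R, SetLike.IsHomogeneousElem 𝒜 r → r ∈ I → r ∈ K) : I ≤ K := fun r hr => by
  classical
  rw [← DirectSum.sum_support_decompose 𝒜 r]
  exact Ideal.sum_mem _ fun i _ => h _ ⟨i, SetLike.coe_mem _⟩ (hI i hr)

theorem stmt_18 :
    (∀ I J J' : Ideal R, I.IsHomogeneous 𝒜 → J.IsHomogeneous 𝒜 → J'.IsHomogeneous 𝒜 →
      (∀ r : R, SetLike.IsHomogeneousElem 𝒜 r → r ∈ I → r ∈ J ∨ r ∈ J') → I ≤ J ∨ I ≤ J') ↔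
    (∀ J J' : Ideal R, J.IsHomogeneous 𝒜 → J'.IsHomogeneous 𝒜 → ¬ J ≤ J' → ¬ J' ≤ J →
      ∃ (g : G) (r r' : R), r ∈ 𝒜 g ∧ r' ∈ 𝒜 g ∧ r ∈ J ∧ r ∉ J' ∧ r' ∈ J' ∧ r' ∉ J) := by
  constructor
  · intro hAv J J' hJ hJ' hJJ' hJ'J
    by_contra hcon
    push_neg at hcon
    have key : ∀ r : R, SetLike.IsHomogeneousElem 𝒜 r → r ∈ J ⊔ J' → r ∈ J ∨ r ∈ J' := by
      rintro r ⟨g, hrg⟩ hr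
      rcases Submodule.mem_sup.mp hr with ⟨a, ha, b, hb, rfl⟩
      have hag : (DirectSum.decompose 𝒜 a g : R) ∈ J := hJ g ha
      have hbg : (DirectSum.decompose 𝒜 b g : R) ∈ J' := hJ' g hb
      have hsum : (DirectSum.decompose 𝒜 a g : R) + (DirectSum.decompose 𝒜 b g : R)
          = a + b := by
        have := DirectSum.decompose_of_mem_same 𝒜 hrg
        rw [DirectSum.decompose_add] at this
        simpa using this
      by_cases hmem : (DirectSum.decompose 𝒜 a g : R) ∈ J'
      · right; rw [← hsum]; exact Ideal.add_mem _ hmem hbg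
      · left
        have hbJ : (DirectSum.decompose 𝒜 b g : R) ∈ J :=
          hcon g _ _ (SetLike.coe_mem _) (SetLike.coe_mem _) hag hmem hbg
        rw [← hsum]; exact Ideal.add_mem _ hag hbJ
    rcases hAv (J ⊔ J') J J' (hJ.sup hJ') hJ hJ' key with h | h
    · exact hJ'J (le_trans le_sup_right h)
    · exact hJJ' (le_trans le_sup_left h)
  · intro hCm I J J' hI hJ hJ' hIJJ'
    by_contra hcon
    push_neg at hcon
    obtain ⟨hIJ, hIJ'⟩ := hcon
    have h1 : ¬ J ⊓ I ≤ J' ⊓ I := by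
      intro h
      apply hIJ'
      apply aux_le_of_homog 𝒜 I J' hI
      intro r hr hrI
      rcases hIJJ' r hr hrI with h' | h'
      · exact (h ⟨h', hrI⟩).1
      · exact h'
    have h2 : ¬ J' ⊓ I ≤ J ⊓ I := by
      intro h
      apply hIJ
      apply aux_le_of_homog 𝒜 I J hI
      intro r hr hrI
      rcases hIJJ' r hr hrI with h' | h'
      · exact h'
      · exact (h ⟨h', hrI⟩).1
    obtain ⟨g, r, r', hrg, hr'g, hrJ, hrnJ', hr'J', hr'nJ⟩ :=
      hCm (J ⊓ I) (J' ⊓ I) (hJ.inf hI) (hJ'.inf hI) h1 h2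
    have hsum : r + r' ∈ I := Ideal.add_mem _ hrJ.2 hr'J'.2
    rcases hIJJ' (r + r') ⟨g, AddSubgroup.add_mem _ hrg hr'g⟩ hsum with h | h
    · exact hr'nJ ⟨by simpa using Ideal.sub_mem _ h hrJ.1, hr'J'.2⟩
    · exact hrnJ' ⟨by simpa using Ideal.sub_mem _ h hr'J'.1, hrJ.2⟩
end Statements
end
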